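/- For the signal f(t) = cos(ω t) + cos((3/2)ω t) with ω > 0, t = 0 is a local maximum of f, and p₁ = (2/ω)(π - arctan(√(25 - 2√10)/(1 + √10))) is a critical point of f, i.e., f'(p₁) = 0. -/

import Mathlib

open Real

theorem stmt_13 (ω : ℝ) (hω : 0 < ω) :
    IsLocalMax (fun t : ℝ => Real.cos (ω * t) + Real.cos ((3 / 2) * ω * t)) 0 ∧
    deriv (fun t : ℝ => Real.cos (ω * t) + Real.cos ((3 / 2) * ω * t))
      ((2 / ω) * (Real.pi -
        Real.arctan (Real.sqrt (25 - 2 * Real.sqrt 10) / (1 + Real.sqrt 10)))) = 0 := by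
  constructor
  · apply Filter.Eventually.of_forall
    intro t
    simp only [mul_zero, Real.cos_zero]
    have := Real.cos_le_one (ω * t)
    have := Real.cos_le_one ((3 / 2) * ω * t)
    linarith
  · set x : ℝ := Real.sqrt (25 - 2 * Real.sqrt 10) / (1 + Real.sqrt 10) with hx
    set θ : ℝ := Real.arctan x with hθ
    set p : ℝ := (2 / ω) * (Real.pi - θ) with hp
    have hω' : ω ≠ 0 := ne_of_gt hω
    have h1 : HasDerivAt (fun t : ℝ => Real.cos (ω * t)) (-Real.sin (ω * p) * ω) p :=
      by have := (Real.hasDerivAt_cos (ω * p)).comp p ((hasDerivAt_id p).const_mul ω); simp at this; rw [neg_mul]; exact this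
    have h2 : HasDerivAt (fun t : ℝ => Real.cos ((3 / 2) * ω * t))
        (-Real.sin ((3 / 2) * ω * p) * ((3 / 2) * ω)) p :=
      by have := ((Real.hasDerivAt_cos ((3 / 2) * ω * p)).comp p ((hasDerivAt_id p).const_mul ((3 / 2) * ω))); simp at this; rw [neg_mul]; exact this
    have hD := (h1.add h2).deriv
    rw [show (fun t : ℝ => Real.cos (ω * t) + Real.cos ((3 / 2) * ω * t)) = (fun t : ℝ => Real.cos (ω * t)) + (fun t : ℝ => Real.cos ((3 / 2) * ω * t)) from rfl, hD]
    have hωp : ω * p = 2 * Real.pi - 2 * θ := by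
      rw [hp]; field_simp
    have hωp3 : (3 / 2) * ω * p = 3 * Real.pi - 3 * θ := by
      rw [hp]; field_simp
    have h10 : (0:ℝ) ≤ 10 := by norm_num
    have hs10' : Real.sqrt 10 ^ 2 = 10 := Real.sq_sqrt h10
    have hs10n : (0:ℝ) ≤ Real.sqrt 10 := Real.sqrt_nonneg 10
    have hpos : (0:ℝ) < 25 - 2 * Real.sqrt 10 := by nlinarith
    have hden : (0:ℝ) < 1 + Real.sqrt 10 := by linarith
    have hx2 : 1 + x ^ 2 = 36 / (1 + Real.sqrt 10) ^ 2 := by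
      rw [hx, div_pow, Real.sq_sqrt hpos.le]
      field_simp
      nlinarith
    have hsq : Real.sqrt (1 + x ^ 2) = 6 / (1 + Real.sqrt 10) := by
      rw [hx2, show (36:ℝ) / (1 + Real.sqrt 10) ^ 2 = (6 / (1 + Real.sqrt 10)) ^ 2 by
        rw [div_pow]; norm_num]
      exact Real.sqrt_sq (by positivity)
    have hc : Real.cos θ = (1 + Real.sqrt 10) / 6 := by
      rw [hθ, Real.cos_arctan, hsq]
      field_simp
    have hs : Real.sin θ = Real.sqrt (25 - 2 * Real.sqrt 10) / 6 := by
      rw [hθ, Real.sin_arctan, hsq, hx]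
      field_simp
    have hs2 : Real.sin θ ^ 2 = (25 - 2 * Real.sqrt 10) / 36 := by
      rw [hs, div_pow, Real.sq_sqrt hpos.le]; norm_num
    have e1 : Real.sin (ω * p) = -Real.sin (2 * θ) := by
      rw [hωp, Real.sin_sub]; simp [Real.sin_two_pi, Real.cos_two_pi]
    have e2 : Real.sin ((3 / 2) * ω * p) = Real.sin (3 * θ) := by
      rw [hωp3, Real.sin_sub]
      rw [show (3:ℝ) * Real.pi = 2 * Real.pi + Real.pi by ring]
      simp [Real.sin_add, Real.cos_add]
    rw [e1, e2, Real.sin_two_mul, Real.sin_three_mul]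
    linear_combination (2 * Real.sin θ * ω) * hc + (6 * Real.sin θ * ω) * hs2
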